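/- Let A be a k-algebra and let α : A → A be a k-algebra automorphism. Then there exists exactly one good left transposition s : H_q⊗A → A⊗H_q with s(D_1⊗a) = α(a)⊗D_1 for all a ∈ A; it is given by s(σ^iD_1^jD_2^k⊗a) = α^{j-k}(a)⊗σ^iD_1^jD_2^k for all a ∈ A, i ∈ ℤ and j,k ≥ 0. -/

import Mathlib

open TensorProduct

noncomputable section
namespace Paper

variable {k : Type*} [Field k]

section Combinators

variable {M N P Q M' N' P' M'' : Type*}
  [AddCommMonoid M] [AddCommMonoid N] [AddCommMonoid P] [AddCommMonoid Q]
  [AddCommMonoid M'] [AddCommMonoid N'] [AddCommMonoid P'] [AddCommMonoid M'']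
  [Module k M] [Module k N] [Module k P] [Module k Q]
  [Module k M'] [Module k N'] [Module k P'] [Module k M'']

/-- `(s ⊗ id) ∘ (id ⊗ s)` : braid a pair of factors past `P`. -/
def braidPast (f : N ⊗[k] P →ₗ[k] P ⊗[k] N') (g : M ⊗[k] P →ₗ[k] P ⊗[k] M') :
    (M ⊗[k] N) ⊗[k] P →ₗ[k] P ⊗[k] (M' ⊗[k] N') :=
  (TensorProduct.assoc k P M' N').toLinearMap
    ∘ₗ g.rTensor N'
    ∘ₗ (TensorProduct.assoc k M P N').symm.toLinearMap
    ∘ₗ f.lTensor M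
    ∘ₗ (TensorProduct.assoc k M N P).toLinearMap

def braidUnder (f : M ⊗[k] N →ₗ[k] N' ⊗[k] M') (g : M' ⊗[k] P →ₗ[k] P' ⊗[k] M'') :
    M ⊗[k] (N ⊗[k] P) →ₗ[k] (N' ⊗[k] P') ⊗[k] M'' :=
  (TensorProduct.assoc k N' P' M'').symm.toLinearMap
    ∘ₗ g.lTensor N'
    ∘ₗ (TensorProduct.assoc k N' M' P).toLinearMap
    ∘ₗ f.rTensor P
    ∘ₗ (TensorProduct.assoc k M N P).symm.toLinearMap

def midMap (f : N ⊗[k] P →ₗ[k] P' ⊗[k] N') :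
    (M ⊗[k] N) ⊗[k] (P ⊗[k] Q) →ₗ[k] (M ⊗[k] P') ⊗[k] (N' ⊗[k] Q) :=
  (TensorProduct.assoc k M P' (N' ⊗[k] Q)).symm.toLinearMap
    ∘ₗ ((TensorProduct.assoc k P' N' Q).toLinearMap.lTensor M)
    ∘ₗ ((f.rTensor Q).lTensor M)
    ∘ₗ ((TensorProduct.assoc k N P Q).symm.toLinearMap.lTensor M)
    ∘ₗ (TensorProduct.assoc k M N (P ⊗[k] Q)).toLinearMap

end Combinators

section Hq

variable (k)
variable (H : Type*) [Ring H]

/-- Axiomatisation of the Hopf algebra `H_q`. -/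
structure HqData [HopfAlgebra k H] (q : k) where
  D₁ : H
  D₂ : H
  σ : Hˣ
  D_comm : D₁ * D₂ = D₂ * D₁
  σD₁ : q • ((σ : H) * D₁) = D₁ * (σ : H)
  σD₂ : q • ((σ : H) * D₂) = D₂ * (σ : H)
  comul_D₁ : Coalgebra.comul (R := k) D₁ = D₁ ⊗ₜ[k] (σ : H) + 1 ⊗ₜ[k] D₁
  comul_D₂ : Coalgebra.comul (R := k) D₂ = D₂ ⊗ₜ[k] (1 : H) + (σ : H) ⊗ₜ[k] D₂
  comul_σ : Coalgebra.comul (R := k) ((σ : H)) = (σ : H) ⊗ₜ[k] (σ : H)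
  counit_D₁ : Coalgebra.counit (R := k) D₁ = 0
  counit_D₂ : Coalgebra.counit (R := k) D₂ = 0
  counit_σ : Coalgebra.counit (R := k) ((σ : H)) = 1
  basis_generic : (∀ l : ℕ, 2 ≤ l → ¬ IsPrimitiveRoot q l) →
      ∃ b : Module.Basis (ℤ × ℕ × ℕ) k H,
        ∀ i j m, b (i, j, m) = ((σ ^ i : Hˣ) : H) * D₁ ^ j * D₂ ^ m
  basis_root : ∀ l : ℕ, 2 ≤ l → IsPrimitiveRoot q l →
      D₁ ^ l = 0 ∧ D₂ ^ l = 0 ∧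
      ∃ b : Module.Basis (ℤ × Fin l × Fin l) k H,
        ∀ i j m, b (i, j, m) = ((σ ^ i : Hˣ) : H) * D₁ ^ (j : ℕ) * D₂ ^ (m : ℕ)

variable (A : Type*) [Ring A] [Algebra k A]

/-- A left transposition of a (standard, flip-braided) bialgebra `H` on an algebra `A`. -/
structure IsTransposition [HopfAlgebra k H] (s : H ⊗[k] A ≃ₗ[k] A ⊗[k] H) : Prop where
  unit_H : ∀ a : A, s ((1 : H) ⊗ₜ[k] a) = a ⊗ₜ[k] (1 : H)
  mul_H : s.toLinearMap ∘ₗ (LinearMap.mul' k H).rTensor A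
      = (LinearMap.mul' k H).lTensor A ∘ₗ braidPast s.toLinearMap s.toLinearMap
  counit_compat : (TensorProduct.rid k A).toLinearMap
        ∘ₗ (Coalgebra.counit (R := k) (A := H)).lTensor A ∘ₗ s.toLinearMap
      = (TensorProduct.lid k A).toLinearMap ∘ₗ (Coalgebra.counit (R := k) (A := H)).rTensor A
  comul_compat : (Coalgebra.comul (R := k) (A := H)).lTensor A ∘ₗ s.toLinearMap
      = braidPast s.toLinearMap s.toLinearMap ∘ₗ (Coalgebra.comul (R := k) (A := H)).rTensor A
  unit_A : ∀ h : H, s (h ⊗ₜ[k] (1 : A)) = (1 : A) ⊗ₜ[k] h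
  mul_A : s.toLinearMap ∘ₗ (LinearMap.mul' k A).lTensor H
      = (LinearMap.mul' k A).rTensor H ∘ₗ braidUnder s.toLinearMap s.toLinearMap
  braid_compat : braidPast s.toLinearMap s.toLinearMap
        ∘ₗ (TensorProduct.comm k H H).toLinearMap.rTensor A
      = (TensorProduct.comm k H H).toLinearMap.lTensor A
        ∘ₗ braidPast s.toLinearMap s.toLinearMap

/-- The action `H ⊗ A → A` attached to an algebra morphism `H →ₐ Module.End k A`. -/
def actMap [HopfAlgebra k H] (ρ : H →ₐ[k] Module.End k A) : H ⊗[k] A →ₗ[k] A :=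
  TensorProduct.lift ρ.toLinearMap

/-- `(A, s)` is a left `H`-braided module algebra via the action `ρ`
(braid of `H` = flip). -/
structure IsModuleAlgebra [HopfAlgebra k H] (s : H ⊗[k] A ≃ₗ[k] A ⊗[k] H)
    (ρ : H →ₐ[k] Module.End k A) : Prop where
  compat_s : s.toLinearMap ∘ₗ (actMap k H A ρ).lTensor H
        ∘ₗ (TensorProduct.assoc k H H A).toLinearMap
      = (actMap k H A ρ).rTensor H
        ∘ₗ (TensorProduct.assoc k H A H).symm.toLinearMap
        ∘ₗ s.toLinearMap.lTensor H
        ∘ₗ (TensorProduct.assoc k H H A).toLinearMap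
        ∘ₗ (TensorProduct.comm k H H).toLinearMap.rTensor A
  mul_act : ∀ (h : H) (a b : A), ρ h (a * b)
      = (LinearMap.mul' k A
          ∘ₗ TensorProduct.map (actMap k H A ρ) (actMap k H A ρ)
          ∘ₗ midMap s.toLinearMap)
        ((Coalgebra.comul (R := k) h) ⊗ₜ[k] (a ⊗ₜ[k] b))
  one_act : ∀ h : H, ρ h (1 : A) = Coalgebra.counit (R := k) h • (1 : A)

/-- `s` is a *good* transposition. -/
def GoodTransposition {q : k} [HopfAlgebra k H] (hq : HqData k H q)
    (s : H ⊗[k] A ≃ₗ[k] A ⊗[k] H) : Prop :=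
  ∀ a : A, braidPast s.toLinearMap s.toLinearMap ((hq.D₁ ⊗ₜ[k] hq.D₂) ⊗ₜ[k] a)
    = a ⊗ₜ[k] (hq.D₁ ⊗ₜ[k] hq.D₂)

end Hq


section Crossed

variable {G : Type*} [Group G] {V : Type*} [AddCommGroup V] [Module k V]

variable (G) in
/-- `f` is a normal 2-cocycle on `G` with values in `kˣ`. -/
structure IsCocycle (f : G → G → kˣ) : Prop where
  one_left : ∀ g, f 1 g = 1
  one_right : ∀ g, f g 1 = 1
  cocycle : ∀ g h l, f g h * f (g * h) l = f g (h * l) * f h l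

variable (A : Type*) [Ring A] [Algebra k A]

/-- Axiomatisation of the crossed product `S(V) #_f G`:  `A` is generated by a copy of `V`
(with commuting elements, generating a copy of the symmetric algebra) and elements `w g`,
and is free as a module over the symmetric part with basis `{w g}`. -/
structure CrossedProduct (ρV : Representation k G V) (f : G → G → kˣ) where
  ι : V →ₗ[k] A
  w : G → A
  w_one : w 1 = 1
  ι_comm : ∀ v v', ι v * ι v' = ι v' * ι v
  w_ι : ∀ g v, w g * ι v = ι (ρV g v) * w g
  w_mul : ∀ g h, w g * w h = (f g h : k) • w (g * h)
  isBasis : ∀ {n : ℕ} (bV : Module.Basis (Fin n) k V),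
      ∃ bA : Module.Basis ((Fin n → ℕ) × G) k A,
        ∀ d g, bA (d, g) = (List.ofFn fun i => ι (bV i) ^ d i).prod * w g

namespace CrossedProduct

variable {A} {ρV : Representation k G V} {f : G → G → kˣ}

/-- The product in `A` of the images of a list of elements of `V`. -/
def mon (cp : CrossedProduct A ρV f) (l : List V) : A := (l.map cp.ι).prod

/-- `v₁ ⋯ v_{j-1}` : the image of the prefix of a monomial. -/
def pre (cp : CrossedProduct A ρV f) {m : ℕ} (v : Fin m → V) (j : Fin m) : A :=
  cp.mon ((List.ofFn v).take j)

/-- `v_{j+1} ⋯ v_m` : the image of the suffix of a monomial. -/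
def suf (cp : CrossedProduct A ρV f) {m : ℕ} (v : Fin m → V) (j : Fin m) : A :=
  cp.mon ((List.ofFn v).drop (j + 1))

/-- The subalgebra `S(V)` of the crossed product. -/
def SV (cp : CrossedProduct A ρV f) : Subalgebra k A :=
  Algebra.adjoin k (Set.range cp.ι)

/-- The subalgebra `S(W)` of the crossed product, for a subspace `W ≤ V`. -/
def SW (cp : CrossedProduct A ρV f) (W : Submodule k V) : Subalgebra k A :=
  Algebra.adjoin k (cp.ι '' (W : Set V))

end CrossedProduct

/-- A linear endomorphism of `V` is `k[G]`-linear if it commutes with the `G`-action. -/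
def GLinear (ρV : Representation k G V) (φ : V →ₗ[k] V) : Prop :=
  ∀ g v, φ (ρV g v) = ρV g (φ v)

variable (G) in
/-- `χ : G → kˣ` is a group homomorphism. -/
def IsCharacter (χ : G → kˣ) : Prop := ∀ g h, χ (g * h) = χ g * χ h

section Defs

variable {H : Type*} [Ring H] [HopfAlgebra k H] {q : k}
variable {ρV : Representation k G V} {f : G → G → kˣ}

/-- `s` is the (good) transposition of `H_q` on `A` associated with the automorphism `α`. -/
def AssocTransposition (hq : HqData k H q)
    (s : H ⊗[k] A ≃ₗ[k] A ⊗[k] H) (α : A ≃ₐ[k] A) : Prop :=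
  IsTransposition k H A s ∧ GoodTransposition k H A hq s
    ∧ (∀ a : A, s (hq.D₁ ⊗ₜ[k] a) = α a ⊗ₜ[k] hq.D₁)
    ∧ (∀ a : A, s (hq.D₂ ⊗ₜ[k] a) = α.symm a ⊗ₜ[k] hq.D₂)

variable {A}

/-- `ς` is the endomorphism of `A` determined by `ς̂` and `χ_ς`. -/
def SigmaDef (cp : CrossedProduct A ρV f) (ςhat : V →ₗ[k] V) (χς : G → kˣ)
    (ς : Module.End k A) : Prop :=
  ∀ (m : ℕ) (v : Fin m → V) (g : G),
    ς (cp.mon (List.ofFn v) * cp.w g)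
      = (χς g : k) • (cp.mon (List.ofFn fun i => ςhat (v i)) * cp.w g)

/-- `δ₁` is determined by `δ̂₁`, `δ̄₁` via the `(α, ς)`-twisted Leibniz formula. -/
def Delta1Def (cp : CrossedProduct A ρV f) (α : A ≃ₐ[k] A) (ς : Module.End k A)
    (δhat : V →ₗ[k] A) (δbar : G → A) (δ : Module.End k A) : Prop :=
  ∀ (m : ℕ) (v : Fin m → V) (g : G),
    δ (cp.mon (List.ofFn v) * cp.w g)
      = (∑ j : Fin m, α (cp.pre v j) * δhat (v j) * ς (cp.suf v j * cp.w g))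
        + α (cp.mon (List.ofFn v)) * δbar g

/-- `δ₂` is determined by `δ̂₂`, `δ̄₂` via the `(ς ∘ α⁻¹, id)`-twisted Leibniz formula. -/
def Delta2Def (cp : CrossedProduct A ρV f) (α : A ≃ₐ[k] A) (ς : Module.End k A)
    (δhat : V →ₗ[k] A) (δbar : G → A) (δ : Module.End k A) : Prop :=
  ∀ (m : ℕ) (v : Fin m → V) (g : G),
    δ (cp.mon (List.ofFn v) * cp.w g)
      = (∑ j : Fin m, ς (α.symm (cp.pre v j)) * δhat (v j) * (cp.suf v j * cp.w g))
        + ς (α.symm (cp.mon (List.ofFn v))) * δbar g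

/-- There is an `H_q`-braided module algebra structure on `(A, s)` with the
prescribed values of the action on `V` and on the `w_g`. -/
def HasHqModuleStructure (hq : HqData k H q) (cp : CrossedProduct A ρV f)
    (s : H ⊗[k] A ≃ₗ[k] A ⊗[k] H) (ςhat : V →ₗ[k] V) (χς : G → kˣ)
    (δhat1 δhat2 : V →ₗ[k] A) (δbar1 δbar2 : G → A) : Prop :=
  ∃ ρ : H →ₐ[k] Module.End k A, IsModuleAlgebra k H A s ρ
    ∧ (∀ v : V, ρ (hq.σ : H) (cp.ι v) = cp.ι (ςhat v))
    ∧ (∀ g : G, ρ (hq.σ : H) (cp.w g) = (χς g : k) • cp.w g)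
    ∧ (∀ v : V, ρ hq.D₁ (cp.ι v) = δhat1 v)
    ∧ (∀ g : G, ρ hq.D₁ (cp.w g) = δbar1 g)
    ∧ (∀ v : V, ρ hq.D₂ (cp.ι v) = δhat2 v)
    ∧ (∀ g : G, ρ hq.D₂ (cp.w g) = δbar2 g)

end Defs

end Crossed

end Paper


section Statement4Aux
open Paper

namespace S4

variable {k : Type*} [Field k] {q : k} {H : Type*} [Ring H] [HopfAlgebra k H]

/-- The monomial `σ^i D₁^j D₂^m`. -/
abbrev mon (hq : HqData k H q) (i : ℤ) (j m : ℕ) : H :=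
  ((hq.σ ^ i : Hˣ) : H) * hq.D₁ ^ j * hq.D₂ ^ m

variable (hq : HqData k H q)

lemma mon_one : mon hq 0 0 0 = 1 := by simp [mon]

lemma mon_sigma (i : ℤ) : mon hq i 0 0 = ((hq.σ ^ i : Hˣ) : H) := by simp [mon]

lemma mon_D1 : mon hq 0 1 0 = hq.D₁ := by simp [mon]

lemma mon_D2 : mon hq 0 0 1 = hq.D₂ := by simp [mon]

section Commutation

lemma D1_sigma : hq.D₁ * ((hq.σ : Hˣ) : H) = q • (((hq.σ : Hˣ) : H) * hq.D₁) := hq.σD₁.symm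

lemma D2_sigma : hq.D₂ * ((hq.σ : Hˣ) : H) = q • (((hq.σ : Hˣ) : H) * hq.D₂) := hq.σD₂.symm

lemma x_sigma_inv (hq0 : q ≠ 0) {x : H}
    (hx : x * ((hq.σ : Hˣ) : H) = q • (((hq.σ : Hˣ) : H) * x)) :
    x * ((hq.σ⁻¹ : Hˣ) : H) = q⁻¹ • (((hq.σ⁻¹ : Hˣ) : H) * x) := by
  have h3 : ((hq.σ⁻¹ : Hˣ) : H) * x = q • (x * ((hq.σ⁻¹ : Hˣ) : H)) := by
    calc ((hq.σ⁻¹ : Hˣ) : H) * x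
        = ((hq.σ⁻¹ : Hˣ) : H) * (x * ((hq.σ : Hˣ) : H)) * ((hq.σ⁻¹ : Hˣ) : H) := by
          rw [mul_assoc ((hq.σ⁻¹ : Hˣ) : H), mul_assoc x, Units.mul_inv, mul_one]
      _ = ((hq.σ⁻¹ : Hˣ) : H) * (q • (((hq.σ : Hˣ) : H) * x)) * ((hq.σ⁻¹ : Hˣ) : H) := by
          rw [hx]
      _ = q • (((hq.σ⁻¹ : Hˣ) : H) * ((hq.σ : Hˣ) : H) * x * ((hq.σ⁻¹ : Hˣ) : H)) := by
          rw [mul_smul_comm, smul_mul_assoc, ← mul_assoc]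
      _ = q • (x * ((hq.σ⁻¹ : Hˣ) : H)) := by rw [Units.inv_mul, one_mul]
  rw [h3, smul_smul, inv_mul_cancel₀ hq0, one_smul]

lemma x_sigma_zpow (hq0 : q ≠ 0) {x : H}
    (hx : x * ((hq.σ : Hˣ) : H) = q • (((hq.σ : Hˣ) : H) * x)) :
    ∀ i : ℤ, ∃ t : k, x * ((hq.σ ^ i : Hˣ) : H) = t • (((hq.σ ^ i : Hˣ) : H) * x) := by
  intro i
  induction i using Int.induction_on with
  | zero => exact ⟨1, by simp⟩
  | succ i ih =>
      obtain ⟨t, ht⟩ := ih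
      refine ⟨t * q, ?_⟩
      have h1 : hq.σ ^ ((i : ℤ) + 1) = hq.σ ^ (i : ℤ) * hq.σ := by rw [zpow_add_one]
      calc x * ((hq.σ ^ ((i : ℤ) + 1) : Hˣ) : H)
          = (x * ((hq.σ ^ (i : ℤ) : Hˣ) : H)) * ((hq.σ : Hˣ) : H) := by
            rw [h1, Units.val_mul, mul_assoc]
        _ = t • (((hq.σ ^ (i : ℤ) : Hˣ) : H) * (x * ((hq.σ : Hˣ) : H))) := by
            rw [ht, smul_mul_assoc, mul_assoc]
        _ = t • (((hq.σ ^ (i : ℤ) : Hˣ) : H) * (q • (((hq.σ : Hˣ) : H) * x))) := by rw [hx]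
        _ = (t * q) • (((hq.σ ^ ((i : ℤ) + 1) : Hˣ) : H) * x) := by
            rw [mul_smul_comm, smul_smul, h1, Units.val_mul, mul_assoc]
  | pred i ih =>
      obtain ⟨t, ht⟩ := ih
      refine ⟨t * q⁻¹, ?_⟩
      have h1 : hq.σ ^ (-(i : ℤ) - 1) = hq.σ ^ (-(i : ℤ)) * hq.σ⁻¹ := by rw [zpow_sub_one]
      calc x * ((hq.σ ^ (-(i : ℤ) - 1) : Hˣ) : H)
          = (x * ((hq.σ ^ (-(i : ℤ)) : Hˣ) : H)) * ((hq.σ⁻¹ : Hˣ) : H) := by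
            rw [h1, Units.val_mul, mul_assoc]
        _ = t • (((hq.σ ^ (-(i : ℤ)) : Hˣ) : H) * (x * ((hq.σ⁻¹ : Hˣ) : H))) := by
            rw [ht, smul_mul_assoc, mul_assoc]
        _ = t • (((hq.σ ^ (-(i : ℤ)) : Hˣ) : H) * (q⁻¹ • (((hq.σ⁻¹ : Hˣ) : H) * x))) := by
            rw [x_sigma_inv hq hq0 hx]
        _ = (t * q⁻¹) • (((hq.σ ^ (-(i : ℤ) - 1) : Hˣ) : H) * x) := by
            rw [mul_smul_comm, smul_smul, h1, Units.val_mul, mul_assoc]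

lemma xpow_sigma_zpow (hq0 : q ≠ 0) {x : H}
    (hx : x * ((hq.σ : Hˣ) : H) = q • (((hq.σ : Hˣ) : H) * x)) :
    ∀ (j : ℕ) (i : ℤ), ∃ t : k,
      x ^ j * ((hq.σ ^ i : Hˣ) : H) = t • (((hq.σ ^ i : Hˣ) : H) * x ^ j) := by
  intro j i
  induction j with
  | zero => exact ⟨1, by simp⟩
  | succ j ih =>
      obtain ⟨t, ht⟩ := ih
      obtain ⟨t', ht'⟩ := x_sigma_zpow hq hq0 hx i
      refine ⟨t' * t, ?_⟩
      calc x ^ (j + 1) * ((hq.σ ^ i : Hˣ) : H)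
          = x ^ j * (x * ((hq.σ ^ i : Hˣ) : H)) := by rw [pow_succ, mul_assoc]
        _ = x ^ j * (t' • (((hq.σ ^ i : Hˣ) : H) * x)) := by rw [ht']
        _ = t' • ((x ^ j * ((hq.σ ^ i : Hˣ) : H)) * x) := by
            rw [mul_smul_comm, mul_assoc]
        _ = t' • ((t • (((hq.σ ^ i : Hˣ) : H) * x ^ j)) * x) := by rw [ht]
        _ = (t' * t) • (((hq.σ ^ i : Hˣ) : H) * x ^ (j + 1)) := by
            rw [smul_mul_assoc, smul_smul, mul_assoc, pow_succ]

lemma mon_mul (hq0 : q ≠ 0) (i : ℤ) (j m : ℕ) (i' : ℤ) (j' m' : ℕ) :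
    ∃ t : k, mon hq i j m * mon hq i' j' m' = t • mon hq (i + i') (j + j') (m + m') := by
  obtain ⟨t₁, ht₁⟩ := xpow_sigma_zpow hq hq0 (D1_sigma hq) j i'
  obtain ⟨t₂, ht₂⟩ := xpow_sigma_zpow hq hq0 (D2_sigma hq) m i'
  refine ⟨t₂ * t₁, ?_⟩
  have hc : Commute hq.D₁ hq.D₂ := hq.D_comm
  have hD : hq.D₂ ^ m * hq.D₁ ^ j' = hq.D₁ ^ j' * hq.D₂ ^ m := ((hc.symm).pow_pow m j').eq
  calc mon hq i j m * mon hq i' j' m'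
      = ((hq.σ ^ i : Hˣ) : H) * (hq.D₁ ^ j *
          ((hq.D₂ ^ m * ((hq.σ ^ i' : Hˣ) : H)) * (hq.D₁ ^ j' * hq.D₂ ^ m'))) := by
        simp only [mon, mul_assoc]
    _ = t₂ • (((hq.σ ^ i : Hˣ) : H) * ((hq.D₁ ^ j * ((hq.σ ^ i' : Hˣ) : H)) *
          (hq.D₂ ^ m * (hq.D₁ ^ j' * hq.D₂ ^ m')))) := by
        rw [ht₂]; simp only [smul_mul_assoc, mul_smul_comm, mul_assoc]
    _ = (t₂ * t₁) • (((hq.σ ^ i : Hˣ) : H) * (((hq.σ ^ i' : Hˣ) : H) *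
          (hq.D₁ ^ j * (hq.D₂ ^ m * (hq.D₁ ^ j' * hq.D₂ ^ m'))))) := by
        rw [ht₁]; simp only [smul_mul_assoc, mul_smul_comm, mul_assoc, smul_smul]
    _ = (t₂ * t₁) • mon hq (i + i') (j + j') (m + m') := by
        congr 1
        rw [show hq.D₂ ^ m * (hq.D₁ ^ j' * hq.D₂ ^ m')
              = hq.D₁ ^ j' * (hq.D₂ ^ m * hq.D₂ ^ m') by
            rw [← mul_assoc, hD, mul_assoc]]
        rw [show hq.D₁ ^ j * (hq.D₁ ^ j' * (hq.D₂ ^ m * hq.D₂ ^ m'))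
              = hq.D₁ ^ (j + j') * hq.D₂ ^ (m + m') by
            rw [← mul_assoc, ← pow_add, ← pow_add]]
        simp only [mon, zpow_add, Units.val_mul, mul_assoc]

end Commutation

lemma comul_sigma_zpow (i : ℤ) :
    Coalgebra.comul (R := k) ((( hq.σ ^ i : Hˣ) : H))
      = ((hq.σ ^ i : Hˣ) : H) ⊗ₜ[k] ((hq.σ ^ i : Hˣ) : H) := by
  let Δ : H →* H ⊗[k] H := (Bialgebra.comulAlgHom k H : H →ₐ[k] H ⊗[k] H).toRingHom.toMonoidHom
  let sq : H →* H ⊗[k] H :=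
    { toFun := fun h => h ⊗ₜ[k] h
      map_one' := rfl
      map_mul' := fun a b => (Algebra.TensorProduct.tmul_mul_tmul a b a b).symm }
  have h1 : Units.map Δ hq.σ = Units.map sq hq.σ := by
    apply Units.ext
    simpa [Δ, sq] using hq.comul_σ
  have h2 : Units.map Δ (hq.σ ^ i) = Units.map sq (hq.σ ^ i) := by
    rw [map_zpow, map_zpow, h1]
  have h3 := congrArg Units.val h2
  rw [Units.coe_map, Units.coe_map] at h3
  simpa [Δ, sq] using h3

/-- Abstract basis data for `H_q`. -/
structure GB : Type _ where
  ι : Type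
  b : Module.Basis ι k H
  d : ι → ℤ
  hom : ∀ (i : ℤ) (j m : ℕ), ∃ (c : k) (z : ι),
    mon hq i j m = c • b z ∧ (c ≠ 0 → d z = (j : ℤ) - (m : ℤ))
  rep : ∀ x : ι, ∃ (i : ℤ) (j m : ℕ), b x = mon hq i j m ∧ d x = (j : ℤ) - (m : ℤ)
  lam : H →ₗ[k] k
  lamD1 : lam hq.D₁ = 1

section Construction

variable (gb : GB hq)

/-- `u` is a scalar multiple of a basis vector of degree `n`. -/
def Sc (n : ℤ) (u : H) : Prop :=
  ∃ (c : k) (z : gb.ι), u = c • gb.b z ∧ (c ≠ 0 → gb.d z = n)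

lemma sc_mon (i : ℤ) (j m : ℕ) : Sc hq gb ((j : ℤ) - (m : ℤ)) (mon hq i j m) := by
  obtain ⟨c, z, h1, h2⟩ := gb.hom i j m
  exact ⟨c, z, h1, h2⟩

lemma sc_basis (x : gb.ι) : Sc hq gb (gb.d x) (gb.b x) :=
  ⟨1, x, (one_smul k _).symm, fun _ => rfl⟩

lemma sc_congr {n n' : ℤ} (h : n = n') {u : H} (hu : Sc hq gb n u) : Sc hq gb n' u := h ▸ hu

lemma sc_one : Sc hq gb 0 (1 : H) := by
  have := sc_mon hq gb 0 0 0
  rw [mon_one] at this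
  simpa using this

lemma sc_D1 : Sc hq gb 1 hq.D₁ := by
  have := sc_mon hq gb 0 1 0
  rw [mon_D1] at this
  simpa using this

lemma sc_D2 : Sc hq gb (-1) hq.D₂ := by
  have := sc_mon hq gb 0 0 1
  rw [mon_D2] at this
  simpa using this

lemma sc_sigma (i : ℤ) : Sc hq gb 0 ((hq.σ ^ i : Hˣ) : H) := by
  have := sc_mon hq gb i 0 0
  rw [mon_sigma] at this
  simpa using this

lemma sc_mul (hq0 : q ≠ 0) {n n' : ℤ} {u v : H} (hu : Sc hq gb n u) (hv : Sc hq gb n' v) :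
    Sc hq gb (n + n') (u * v) := by
  obtain ⟨c, z, rfl, hz⟩ := hu
  obtain ⟨c', z', rfl, hz'⟩ := hv
  obtain ⟨i, j, m, hb, hd⟩ := gb.rep z
  obtain ⟨i', j', m', hb', hd'⟩ := gb.rep z'
  obtain ⟨t, ht⟩ := mon_mul hq hq0 i j m i' j' m'
  obtain ⟨c'', z'', h1, h2⟩ := gb.hom (i + i') (j + j') (m + m')
  refine ⟨c * c' * t * c'', z'', ?_, ?_⟩
  · rw [smul_mul_assoc, mul_smul_comm, hb, hb', ht, h1, smul_smul, smul_smul, smul_smul]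
  · intro hne
    have hc'' : c'' ≠ 0 := fun h => hne (by rw [h, mul_zero])
    have hcc : c ≠ 0 ∧ c' ≠ 0 := by
      constructor <;> intro h <;> apply hne <;> simp [h]
    rw [h2 hc'', ← hz hcc.1, ← hz' hcc.2, hd, hd']
    push_cast
    ring

/-- Span of the degree-`n` part of `H ⊗ H`. -/
def T (n : ℤ) : Submodule k (H ⊗[k] H) :=
  Submodule.span k {u | ∃ p r, gb.d p + gb.d r = n ∧ u = gb.b p ⊗ₜ[k] gb.b r}

lemma sc_tmul_mem {n n' : ℤ} {u v : H} (hu : Sc hq gb n u) (hv : Sc hq gb n' v) :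
    u ⊗ₜ[k] v ∈ T hq gb (n + n') := by
  obtain ⟨c, z, rfl, hz⟩ := hu
  obtain ⟨c', z', rfl, hz'⟩ := hv
  rcases eq_or_ne c 0 with h | h
  · simp [h]
  rcases eq_or_ne c' 0 with h' | h'
  · simp [h']
  rw [← smul_tmul', tmul_smul]
  refine Submodule.smul_mem _ _ (Submodule.smul_mem _ _ (Submodule.subset_span ?_))
  exact ⟨z, z', by rw [hz h, hz' h'], rfl⟩

lemma T_mul_mem (hq0 : q ≠ 0) {n n' : ℤ} {u v : H ⊗[k] H}
    (hu : u ∈ T hq gb n) (hv : v ∈ T hq gb n') : u * v ∈ T hq gb (n + n') := by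
  have hle : T hq gb n * T hq gb n' ≤ T hq gb (n + n') := by
    rw [T, T, Submodule.span_mul_span]
    refine Submodule.span_le.2 ?_
    rintro w ⟨u', ⟨p, r, hpr, rfl⟩, v', ⟨p', r', hpr', rfl⟩, rfl⟩
    have h1 : (gb.b p ⊗ₜ[k] gb.b r) * (gb.b p' ⊗ₜ[k] gb.b r')
        = (gb.b p * gb.b p') ⊗ₜ[k] (gb.b r * gb.b r') :=
      Algebra.TensorProduct.tmul_mul_tmul _ _ _ _
    show (gb.b p ⊗ₜ[k] gb.b r) * (gb.b p' ⊗ₜ[k] gb.b r') ∈ T hq gb (n + n')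
    rw [h1]
    have hm1 := sc_mul hq gb hq0 (sc_basis hq gb p) (sc_basis hq gb p')
    have hm2 := sc_mul hq gb hq0 (sc_basis hq gb r) (sc_basis hq gb r')
    have := sc_tmul_mem hq gb hm1 hm2
    rwa [show gb.d p + gb.d p' + (gb.d r + gb.d r') = n + n' by omega] at this
  exact hle (Submodule.mul_mem_mul hu hv)

lemma T_one_mem : (1 : H ⊗[k] H) ∈ T hq gb 0 := by
  rw [Algebra.TensorProduct.one_def]
  simpa using sc_tmul_mem hq gb (sc_one hq gb) (sc_one hq gb)

lemma T_pow_mem (hq0 : q ≠ 0) {n : ℤ} {u : H ⊗[k] H} (hu : u ∈ T hq gb n) (j : ℕ) :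
    u ^ j ∈ T hq gb ((j : ℤ) * n) := by
  induction j with
  | zero => simpa using T_one_mem hq gb
  | succ j ih =>
      have := T_mul_mem hq gb hq0 ih hu
      rw [← pow_succ] at this
      rwa [show ((j : ℤ) * n + n) = ((j + 1 : ℕ) : ℤ) * n by push_cast; ring] at this

lemma comul_basis_mem (hq0 : q ≠ 0) (x : gb.ι) :
    Coalgebra.comul (R := k) (gb.b x) ∈ T hq gb (gb.d x) := by
  obtain ⟨i, j, m, hb, hd⟩ := gb.rep x
  have hΔ : Coalgebra.comul (R := k) (gb.b x)
      = Coalgebra.comul (R := k) ((hq.σ ^ i : Hˣ) : H)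
        * (Coalgebra.comul (R := k) hq.D₁) ^ j
        * (Coalgebra.comul (R := k) hq.D₂) ^ m := by
    rw [hb]
    simp only [mon]
    rw [show Coalgebra.comul (R := k) (((hq.σ ^ i : Hˣ) : H) * hq.D₁ ^ j * hq.D₂ ^ m)
        = (Bialgebra.comulAlgHom k H) (((hq.σ ^ i : Hˣ) : H) * hq.D₁ ^ j * hq.D₂ ^ m) from rfl]
    rw [map_mul, map_mul, map_pow, map_pow]
    rfl
  have h1 : Coalgebra.comul (R := k) ((hq.σ ^ i : Hˣ) : H) ∈ T hq gb 0 := by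
    rw [comul_sigma_zpow]
    simpa using sc_tmul_mem hq gb (sc_sigma hq gb i) (sc_sigma hq gb i)
  have h2 : Coalgebra.comul (R := k) hq.D₁ ∈ T hq gb 1 := by
    rw [hq.comul_D₁]
    refine add_mem ?_ ?_
    · have := sc_tmul_mem hq gb (sc_D1 hq gb) (sc_sigma hq gb 1)
      simpa using this
    · have := sc_tmul_mem hq gb (sc_one hq gb) (sc_D1 hq gb)
      simpa using this
  have h3 : Coalgebra.comul (R := k) hq.D₂ ∈ T hq gb (-1) := by
    rw [hq.comul_D₂]
    refine add_mem ?_ ?_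
    · have := sc_tmul_mem hq gb (sc_D2 hq gb) (sc_one hq gb)
      simpa using this
    · have := sc_tmul_mem hq gb (sc_sigma hq gb 1) (sc_D2 hq gb)
      simpa using this
  have := T_mul_mem hq gb hq0 (T_mul_mem hq gb hq0 h1 (T_pow_mem hq gb hq0 h2 j))
    (T_pow_mem hq gb hq0 h3 m)
  rw [hΔ, hd]
  rwa [show (0 : ℤ) + (j : ℤ) * 1 + (m : ℤ) * (-1) = (j : ℤ) - (m : ℤ) by ring] at this

variable {A : Type*} [Ring A] [Algebra k A] (α : A ≃ₐ[k] A)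

lemma pow_apply_cancel (n : ℤ) (a : A) : (α ^ n) ((α ^ (-n)) a) = a := by
  rw [← AlgEquiv.mul_apply, ← zpow_add, show n + -n = 0 by ring, zpow_zero, AlgEquiv.one_apply]

lemma pow_apply_cancel' (n : ℤ) (a : A) : (α ^ (-n)) ((α ^ n) a) = a := by
  have := pow_apply_cancel α (-n) a
  rwa [neg_neg] at this

lemma pow_apply_add (n n' : ℤ) (a : A) : (α ^ n) ((α ^ n') a) = (α ^ (n + n')) a := by
  rw [← AlgEquiv.mul_apply, ← zpow_add]

/-- The forward map of the transposition. -/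
def sL : H ⊗[k] A →ₗ[k] A ⊗[k] H :=
  TensorProduct.lift (gb.b.constr k fun x =>
    (TensorProduct.mk k A H).flip (gb.b x) ∘ₗ (α ^ gb.d x : A ≃ₐ[k] A).toLinearMap)

/-- The backward map of the transposition. -/
def sInvL : A ⊗[k] H →ₗ[k] H ⊗[k] A :=
  TensorProduct.lift ((gb.b.constr k fun x =>
    (TensorProduct.mk k H A (gb.b x)) ∘ₗ (α ^ (-gb.d x) : A ≃ₐ[k] A).toLinearMap).flip)

lemma sL_basis (x : gb.ι) (a : A) :
    sL hq gb α (gb.b x ⊗ₜ[k] a) = (α ^ gb.d x) a ⊗ₜ[k] gb.b x := by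
  simp [sL, Module.Basis.constr_basis]

lemma sInvL_basis (a : A) (x : gb.ι) :
    sInvL hq gb α (a ⊗ₜ[k] gb.b x) = gb.b x ⊗ₜ[k] (α ^ (-gb.d x)) a := by
  simp [sInvL, Module.Basis.constr_basis]

/-- The transposition, as a linear equivalence. -/
def sE : H ⊗[k] A ≃ₗ[k] A ⊗[k] H :=
  LinearEquiv.ofLinear (sL hq gb α) (sInvL hq gb α)
    (TensorProduct.ext (LinearMap.ext fun a => gb.b.ext fun x => by
      have h : sL hq gb α (sInvL hq gb α (a ⊗ₜ[k] gb.b x)) = a ⊗ₜ[k] gb.b x := by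
        rw [sInvL_basis, sL_basis, pow_apply_cancel]
      simpa using h))
    (TensorProduct.ext (gb.b.ext fun x => LinearMap.ext fun a => by
      have h : sInvL hq gb α (sL hq gb α (gb.b x ⊗ₜ[k] a)) = gb.b x ⊗ₜ[k] a := by
        rw [sL_basis, sInvL_basis, pow_apply_cancel']
      simpa using h))

lemma sE_basis (x : gb.ι) (a : A) :
    sE hq gb α (gb.b x ⊗ₜ[k] a) = (α ^ gb.d x) a ⊗ₜ[k] gb.b x := by
  rw [sE, LinearEquiv.ofLinear_apply, sL_basis]

lemma sE_sc {n : ℤ} {u : H} (hu : Sc hq gb n u) (a : A) :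
    sE hq gb α (u ⊗ₜ[k] a) = (α ^ n) a ⊗ₜ[k] u := by
  obtain ⟨c, z, rfl, hz⟩ := hu
  rcases eq_or_ne c 0 with h | h
  · simp [h]
  rw [← smul_tmul', map_smul, sE_basis, hz h, tmul_smul]

lemma sE_mon (hq0 : q ≠ 0) (i : ℤ) (j m : ℕ) (a : A) :
    sE hq gb α (mon hq i j m ⊗ₜ[k] a)
      = (α ^ ((j : ℤ) - (m : ℤ))) a ⊗ₜ[k] mon hq i j m :=
  sE_sc hq gb α (sc_mon hq gb i j m) a

end Construction

section Transposition

variable (gb : GB hq)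
variable {A : Type*} [Ring A] [Algebra k A] (α : A ≃ₐ[k] A)

lemma extHA {X : Type*} [AddCommMonoid X] [Module k X] {f g : H ⊗[k] A →ₗ[k] X}
    (h : ∀ x a, f (gb.b x ⊗ₜ[k] a) = g (gb.b x ⊗ₜ[k] a)) : f = g :=
  TensorProduct.ext (gb.b.ext fun x => LinearMap.ext fun a => by simpa using h x a)

lemma extHHA {X : Type*} [AddCommMonoid X] [Module k X]
    {f g : (H ⊗[k] H) ⊗[k] A →ₗ[k] X}
    (h : ∀ x y a, f ((gb.b x ⊗ₜ[k] gb.b y) ⊗ₜ[k] a) = g ((gb.b x ⊗ₜ[k] gb.b y) ⊗ₜ[k] a)) :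
    f = g :=
  TensorProduct.ext (TensorProduct.ext (gb.b.ext fun x => gb.b.ext fun y =>
    LinearMap.ext fun a => by simpa using h x y a))

lemma extHAA {X : Type*} [AddCommMonoid X] [Module k X]
    {f g : H ⊗[k] (A ⊗[k] A) →ₗ[k] X}
    (h : ∀ x a a', f (gb.b x ⊗ₜ[k] (a ⊗ₜ[k] a')) = g (gb.b x ⊗ₜ[k] (a ⊗ₜ[k] a'))) : f = g :=
  TensorProduct.ext (gb.b.ext fun x => TensorProduct.ext' fun a a' => by simpa using h x a a')

lemma braidPast_aux (g : H ⊗[k] A →ₗ[k] A ⊗[k] H) (h : H) (φ : A →ₗ[k] A)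
    (hg : ∀ a', g (h ⊗ₜ[k] a') = φ a' ⊗ₜ[k] h) (u : A ⊗[k] H) :
    (TensorProduct.assoc k A H H)
        ((g.rTensor H) ((TensorProduct.assoc k H A H).symm (h ⊗ₜ[k] u)))
      = TensorProduct.map φ ((TensorProduct.mk k H H) h) u := by
  induction u using TensorProduct.induction_on with
  | zero => simp only [tmul_zero, LinearEquiv.map_zero, LinearMap.map_zero]
  | tmul a' h'' =>
      rw [TensorProduct.assoc_symm_tmul, LinearMap.rTensor_tmul, hg,
        TensorProduct.assoc_tmul, TensorProduct.map_tmul]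
      rfl
  | add u v hu hv => simp only [tmul_add, map_add, hu, hv]

lemma braidPast_point (f g : H ⊗[k] A →ₗ[k] A ⊗[k] H) (h h' : H) (a : A) (φ : A →ₗ[k] A)
    (hg : ∀ a', g (h ⊗ₜ[k] a') = φ a' ⊗ₜ[k] h) :
    braidPast f g ((h ⊗ₜ[k] h') ⊗ₜ[k] a)
      = TensorProduct.map φ ((TensorProduct.mk k H H) h) (f (h' ⊗ₜ[k] a)) := by
  simp only [braidPast, LinearMap.coe_comp, Function.comp_apply, LinearEquiv.coe_coe]
  rw [TensorProduct.assoc_tmul, LinearMap.lTensor_tmul]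
  exact braidPast_aux g h φ hg _

lemma braidPast_point₂ (f g : H ⊗[k] A →ₗ[k] A ⊗[k] H) (h h' : H) (a a' : A) (h'' : H)
    (hf : f (h' ⊗ₜ[k] a) = a' ⊗ₜ[k] h'') :
    braidPast f g ((h ⊗ₜ[k] h') ⊗ₜ[k] a)
      = (TensorProduct.assoc k A H H) ((g (h ⊗ₜ[k] a')) ⊗ₜ[k] h'') := by
  simp only [braidPast, LinearMap.coe_comp, Function.comp_apply, LinearEquiv.coe_coe]
  rw [TensorProduct.assoc_tmul, LinearMap.lTensor_tmul, hf,
    TensorProduct.assoc_symm_tmul, LinearMap.rTensor_tmul]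

lemma lTensor_mul_map (φ : A →ₗ[k] A) (h : H) (u : A ⊗[k] H) :
    (LinearMap.mul' k H).lTensor A (TensorProduct.map φ ((TensorProduct.mk k H H) h) u)
      = TensorProduct.map φ (LinearMap.mulLeft k h) u := by
  induction u using TensorProduct.induction_on with
  | zero => simp
  | tmul a' h' => simp
  | add u v hu hv => simp only [map_add, hu, hv]

lemma assoc_mul_right (u : A ⊗[k] H) (h : H) :
    (LinearMap.mul' k H).lTensor A ((TensorProduct.assoc k A H H) (u ⊗ₜ[k] h))
      = (LinearMap.mulRight k h).lTensor A u := by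
  induction u using TensorProduct.induction_on with
  | zero =>
      rw [zero_tmul, LinearEquiv.map_zero, LinearMap.map_zero, LinearMap.map_zero]
  | tmul a' h' =>
      rw [TensorProduct.assoc_tmul, LinearMap.lTensor_tmul, LinearMap.mul'_apply,
        LinearMap.lTensor_tmul, LinearMap.mulRight_apply]
  | add u v hu hv =>
      rw [add_tmul, LinearEquiv.map_add, LinearMap.map_add, LinearMap.map_add, hu, hv]

lemma sE_toLinearMap_basis (x : gb.ι) (a : A) :
    (sE hq gb α).toLinearMap (gb.b x ⊗ₜ[k] a)
      = ((α ^ gb.d x : A ≃ₐ[k] A).toLinearMap) a ⊗ₜ[k] gb.b x := by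
  simpa using sE_basis hq gb α x a

lemma braidPast_T {n : ℤ} {u : H ⊗[k] H} (hu : u ∈ T hq gb n) (a : A) :
    braidPast (sE hq gb α).toLinearMap (sE hq gb α).toLinearMap (u ⊗ₜ[k] a)
      = (α ^ n) a ⊗ₜ[k] u := by
  induction hu using Submodule.span_induction with
  | mem u hu =>
      obtain ⟨p, r, hpr, rfl⟩ := hu
      rw [braidPast_point _ _ _ _ _ _ (sE_toLinearMap_basis hq gb α p)]
      have h2 : (sE hq gb α).toLinearMap (gb.b r ⊗ₜ[k] a) = (α ^ gb.d r) a ⊗ₜ[k] gb.b r := by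
        simpa using sE_basis hq gb α r a
      rw [h2, TensorProduct.map_tmul, TensorProduct.mk_apply, AlgEquiv.toLinearMap_apply,
        pow_apply_add, hpr]
  | zero => simp
  | add u v hu hv ihu ihv => rw [add_tmul, map_add, ihu, ihv, tmul_add]
  | smul c u hu ihu => rw [← smul_tmul', map_smul, ihu, tmul_smul]

theorem isTransposition_sE (hq0 : q ≠ 0) : IsTransposition k H A (sE hq gb α) where
  unit_H a := by
    have h := sE_sc hq gb α (sc_one hq gb) a
    simpa using h
  mul_H := by
    refine extHHA hq gb fun x y a => ?_
    rw [LinearMap.comp_apply, LinearMap.comp_apply,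
      braidPast_point _ _ _ _ _ _ (sE_toLinearMap_basis hq gb α x), lTensor_mul_map,
      LinearMap.rTensor_tmul, LinearMap.mul'_apply]
    have h1 : (sE hq gb α).toLinearMap ((gb.b x * gb.b y) ⊗ₜ[k] a)
        = (α ^ (gb.d x + gb.d y)) a ⊗ₜ[k] (gb.b x * gb.b y) := by
      simpa using sE_sc hq gb α (sc_mul hq gb hq0 (sc_basis hq gb x) (sc_basis hq gb y)) a
    have h2 : (sE hq gb α).toLinearMap (gb.b y ⊗ₜ[k] a) = (α ^ gb.d y) a ⊗ₜ[k] gb.b y := by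
      simpa using sE_basis hq gb α y a
    rw [h1, h2, TensorProduct.map_tmul, LinearMap.mulLeft_apply,
      AlgEquiv.toLinearMap_apply, pow_apply_add]
  counit_compat := by
    refine extHA hq gb fun x a => ?_
    obtain ⟨i, j, m, hb, hd⟩ := gb.rep x
    simp only [LinearMap.coe_comp, Function.comp_apply, LinearEquiv.coe_coe]
    have hs : (sE hq gb α) (gb.b x ⊗ₜ[k] a) = (α ^ gb.d x) a ⊗ₜ[k] gb.b x :=
      sE_basis hq gb α x a
    rw [hs, LinearMap.lTensor_tmul, LinearMap.rTensor_tmul, TensorProduct.rid_tmul,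
      TensorProduct.lid_tmul]
    by_cases hjm : j = 0 ∧ m = 0
    · rw [hd, hjm.1, hjm.2]
      norm_num
    · have hz : Coalgebra.counit (R := k) (gb.b x) = 0 := by
        rw [hb]
        have : Coalgebra.counit (R := k) (mon hq i j m)
            = Coalgebra.counit (R := k) ((hq.σ ^ i : Hˣ) : H)
              * (Coalgebra.counit (R := k) hq.D₁) ^ j
              * (Coalgebra.counit (R := k) hq.D₂) ^ m := by
          rw [show Coalgebra.counit (R := k) (mon hq i j m)
              = (Bialgebra.counitAlgHom k H) (mon hq i j m) from rfl, map_mul, map_mul,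
            map_pow, map_pow]
          rfl
        rw [this, hq.counit_D₁, hq.counit_D₂]
        rcases not_and_or.mp hjm with hj | hm
        · rw [zero_pow hj]; ring
        · rw [zero_pow hm]; ring
      rw [hz]
      simp
  comul_compat := by
    refine extHA hq gb fun x a => ?_
    simp only [LinearMap.coe_comp, Function.comp_apply, LinearEquiv.coe_coe]
    have hs : (sE hq gb α) (gb.b x ⊗ₜ[k] a) = (α ^ gb.d x) a ⊗ₜ[k] gb.b x :=
      sE_basis hq gb α x a
    rw [hs, LinearMap.lTensor_tmul, LinearMap.rTensor_tmul,
      braidPast_T hq gb α (comul_basis_mem hq gb hq0 x) a]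
  unit_A h := by
    have hmaps : (sE hq gb α).toLinearMap ∘ₗ ((TensorProduct.mk k H A).flip 1)
        = TensorProduct.mk k A H 1 := gb.b.ext fun x => by
      simp only [LinearMap.comp_apply, LinearMap.flip_apply, TensorProduct.mk_apply]
      rw [show (sE hq gb α).toLinearMap (gb.b x ⊗ₜ[k] (1 : A)) = sE hq gb α (gb.b x ⊗ₜ[k] 1)
        from rfl, sE_basis]
      rw [map_one]
    have := LinearMap.congr_fun hmaps h
    simpa using this
  mul_A := by
    refine extHAA hq gb fun x a a' => ?_
    have h2 : ∀ b : A, (sE hq gb α).toLinearMap (gb.b x ⊗ₜ[k] b)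
        = (α ^ gb.d x) b ⊗ₜ[k] gb.b x := fun b => by simpa using sE_basis hq gb α x b
    simp only [braidUnder, LinearMap.coe_comp, Function.comp_apply, LinearEquiv.coe_coe,
      LinearMap.lTensor_tmul, LinearMap.mul'_apply]
    rw [TensorProduct.assoc_symm_tmul, LinearMap.rTensor_tmul, h2 a,
      TensorProduct.assoc_tmul, LinearMap.lTensor_tmul, h2 a',
      TensorProduct.assoc_symm_tmul, LinearMap.rTensor_tmul, LinearMap.mul'_apply,
      sE_basis hq gb α x (a * a'), map_mul]
  braid_compat := by
    refine extHHA hq gb fun x y a => ?_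
    simp only [LinearMap.coe_comp, Function.comp_apply, LinearEquiv.coe_coe,
      LinearMap.rTensor_tmul, TensorProduct.comm_tmul]
    rw [braidPast_point _ _ _ _ _ _ (sE_toLinearMap_basis hq gb α y),
      braidPast_point _ _ _ _ _ _ (sE_toLinearMap_basis hq gb α x)]
    have h2 : (sE hq gb α).toLinearMap (gb.b x ⊗ₜ[k] a) = (α ^ gb.d x) a ⊗ₜ[k] gb.b x := by
      simpa using sE_basis hq gb α x a
    have h3 : (sE hq gb α).toLinearMap (gb.b y ⊗ₜ[k] a) = (α ^ gb.d y) a ⊗ₜ[k] gb.b y := by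
      simpa using sE_basis hq gb α y a
    rw [h2, h3, TensorProduct.map_tmul, TensorProduct.map_tmul]
    simp only [TensorProduct.mk_apply, LinearMap.lTensor_tmul, LinearEquiv.coe_coe,
      TensorProduct.comm_tmul, AlgEquiv.toLinearMap_apply, pow_apply_add]
    rw [add_comm (gb.d y)]

lemma good_sE : GoodTransposition k H A hq (sE hq gb α) := by
  intro a
  have hgD1 : ∀ a', (sE hq gb α).toLinearMap (hq.D₁ ⊗ₜ[k] a') = α.toLinearMap a' ⊗ₜ[k] hq.D₁ :=
    fun a' => by
      have := sE_sc hq gb α (sc_D1 hq gb) a'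
      simpa [zpow_one] using this
  rw [braidPast_point _ _ _ _ _ _ hgD1]
  have hD2 : (sE hq gb α).toLinearMap (hq.D₂ ⊗ₜ[k] a) = (α ^ (-1 : ℤ)) a ⊗ₜ[k] hq.D₂ := by
    simpa using sE_sc hq gb α (sc_D2 hq gb) a
  rw [hD2, TensorProduct.map_tmul, TensorProduct.mk_apply, AlgEquiv.toLinearMap_apply]
  rw [show α ((α ^ (-1 : ℤ)) a) = (α ^ (1 : ℤ)) ((α ^ (-(1 : ℤ))) a) by rw [zpow_one],
    pow_apply_cancel]

lemma sE_D1 (a : A) : sE hq gb α (hq.D₁ ⊗ₜ[k] a) = α a ⊗ₜ[k] hq.D₁ := by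
  have := sE_sc hq gb α (sc_D1 hq gb) a
  simpa [zpow_one] using this

end Transposition

section Uniqueness

variable (gb : GB hq)
variable {A : Type*} [Ring A] [Algebra k A] (α : A ≃ₐ[k] A)
variable (s' : H ⊗[k] A ≃ₗ[k] A ⊗[k] H)

include gb in
lemma J_inj {u v : A ⊗[k] H}
    (h : TensorProduct.map α.toLinearMap ((TensorProduct.mk k H H) hq.D₁) u
      = TensorProduct.map α.toLinearMap ((TensorProduct.mk k H H) hq.D₁) v) : u = v := by
  have hLJ : ∀ w : A ⊗[k] H,
      TensorProduct.map α.symm.toLinearMap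
          ((TensorProduct.lid k H).toLinearMap ∘ₗ (gb.lam.rTensor H))
          (TensorProduct.map α.toLinearMap ((TensorProduct.mk k H H) hq.D₁) w) = w := by
    intro w
    induction w using TensorProduct.induction_on with
    | zero => rw [LinearMap.map_zero, LinearMap.map_zero]
    | tmul a h'' =>
        rw [TensorProduct.map_tmul, TensorProduct.mk_apply, TensorProduct.map_tmul,
          LinearMap.comp_apply, LinearMap.rTensor_tmul, gb.lamD1]
        simp
    | add u v hu hv => rw [LinearMap.map_add, LinearMap.map_add, hu, hv]
  rw [← hLJ u, ← hLJ v, h]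

variable (ht : IsTransposition k H A s')
  (hgood : GoodTransposition k H A hq s')
  (hD1 : ∀ a : A, s' (hq.D₁ ⊗ₜ[k] a) = α a ⊗ₜ[k] hq.D₁)

include ht

section
include gb hgood hD1

lemma step_D2 (a : A) : s' (hq.D₂ ⊗ₜ[k] a) = α.symm a ⊗ₜ[k] hq.D₂ := by
  have hg := hgood a
  rw [braidPast_point s'.toLinearMap s'.toLinearMap hq.D₁ hq.D₂ a α.toLinearMap
    (fun a' => by simpa using hD1 a')] at hg
  apply J_inj hq gb α
  rw [show TensorProduct.map α.toLinearMap ((TensorProduct.mk k H H) hq.D₁)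
      (s' (hq.D₂ ⊗ₜ[k] a)) = TensorProduct.map α.toLinearMap ((TensorProduct.mk k H H) hq.D₁)
      (s'.toLinearMap (hq.D₂ ⊗ₜ[k] a)) from rfl, hg, TensorProduct.map_tmul,
    TensorProduct.mk_apply, AlgEquiv.toLinearMap_apply, AlgEquiv.apply_symm_apply]

lemma step_sigma (a : A) :
    s' (((hq.σ : Hˣ) : H) ⊗ₜ[k] a) = a ⊗ₜ[k] ((hq.σ : Hˣ) : H) := by
  have hcc := LinearMap.congr_fun ht.comul_compat (hq.D₁ ⊗ₜ[k] a)
  simp only [LinearMap.coe_comp, Function.comp_apply, LinearEquiv.coe_coe] at hcc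
  rw [hD1 a, LinearMap.lTensor_tmul, LinearMap.rTensor_tmul, hq.comul_D₁, tmul_add,
    add_tmul, map_add,
    braidPast_point s'.toLinearMap s'.toLinearMap hq.D₁ ((hq.σ : Hˣ) : H) a α.toLinearMap
      (fun a' => by simpa using hD1 a'),
    braidPast_point s'.toLinearMap s'.toLinearMap 1 hq.D₁ a LinearMap.id
      (fun a' => by simpa using ht.unit_H a'),
    show s'.toLinearMap (hq.D₁ ⊗ₜ[k] a) = α a ⊗ₜ[k] hq.D₁ from hD1 a,
    TensorProduct.map_tmul, TensorProduct.mk_apply, LinearMap.id_apply] at hcc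
  have h5 := add_right_cancel hcc
  apply J_inj hq gb α
  rw [show TensorProduct.map α.toLinearMap ((TensorProduct.mk k H H) hq.D₁)
      (s' (((hq.σ : Hˣ) : H) ⊗ₜ[k] a)) = TensorProduct.map α.toLinearMap
      ((TensorProduct.mk k H H) hq.D₁) (s'.toLinearMap (((hq.σ : Hˣ) : H) ⊗ₜ[k] a)) from rfl,
    ← h5, TensorProduct.map_tmul, TensorProduct.mk_apply, AlgEquiv.toLinearMap_apply]

lemma step_sigma_inv (a : A) :
    s' (((hq.σ⁻¹ : Hˣ) : H) ⊗ₜ[k] a) = a ⊗ₜ[k] ((hq.σ⁻¹ : Hˣ) : H) := by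
  have hm := LinearMap.congr_fun ht.mul_H
    ((((hq.σ⁻¹ : Hˣ) : H) ⊗ₜ[k] ((hq.σ : Hˣ) : H)) ⊗ₜ[k] a)
  simp only [LinearMap.coe_comp, Function.comp_apply, LinearEquiv.coe_coe] at hm
  rw [braidPast_point₂ s'.toLinearMap s'.toLinearMap ((hq.σ⁻¹ : Hˣ) : H) ((hq.σ : Hˣ) : H)
      a a ((hq.σ : Hˣ) : H)
      (by simpa using step_sigma hq gb α s' ht hgood hD1 a),
    LinearMap.rTensor_tmul, LinearMap.mul'_apply, Units.inv_mul, ht.unit_H,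
    assoc_mul_right] at hm
  have key : ∀ w : A ⊗[k] H,
      (LinearMap.mulRight k ((hq.σ⁻¹ : Hˣ) : H)).lTensor A
        ((LinearMap.mulRight k ((hq.σ : Hˣ) : H)).lTensor A w) = w := by
    intro w
    induction w using TensorProduct.induction_on with
    | zero => rw [LinearMap.map_zero, LinearMap.map_zero]
    | tmul a' h'' =>
        rw [LinearMap.lTensor_tmul, LinearMap.lTensor_tmul, LinearMap.mulRight_apply,
          LinearMap.mulRight_apply, mul_assoc, Units.mul_inv, mul_one]
    | add u v hu hv => rw [LinearMap.map_add, LinearMap.map_add, hu, hv]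
  have h6 := congrArg ((LinearMap.mulRight k ((hq.σ⁻¹ : Hˣ) : H)).lTensor A) hm
  rw [key, LinearMap.lTensor_tmul, LinearMap.mulRight_apply, one_mul] at h6
  exact h6.symm

end

lemma step_mul {h h' : H} {n n' : ℤ}
    (Ph : ∀ a : A, s' (h ⊗ₜ[k] a) = (α ^ n) a ⊗ₜ[k] h)
    (Ph' : ∀ a : A, s' (h' ⊗ₜ[k] a) = (α ^ n') a ⊗ₜ[k] h') :
    ∀ a : A, s' ((h * h') ⊗ₜ[k] a) = (α ^ (n + n')) a ⊗ₜ[k] (h * h') := by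
  intro a
  have hm := LinearMap.congr_fun ht.mul_H ((h ⊗ₜ[k] h') ⊗ₜ[k] a)
  simp only [LinearMap.coe_comp, Function.comp_apply, LinearEquiv.coe_coe] at hm
  rw [LinearMap.rTensor_tmul, LinearMap.mul'_apply,
    braidPast_point s'.toLinearMap s'.toLinearMap h h' a (α ^ n : A ≃ₐ[k] A).toLinearMap
      (fun a' => by simpa using Ph a'),
    lTensor_mul_map,
    show s'.toLinearMap (h' ⊗ₜ[k] a) = (α ^ n') a ⊗ₜ[k] h' from Ph' a,
    TensorProduct.map_tmul, LinearMap.mulLeft_apply, AlgEquiv.toLinearMap_apply,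
    pow_apply_add] at hm
  exact hm

include hgood hD1

include gb hgood hD1 in
lemma formula : ∀ (i : ℤ) (j m : ℕ) (a : A),
    s' (mon hq i j m ⊗ₜ[k] a) = (α ^ ((j : ℤ) - (m : ℤ))) a ⊗ₜ[k] mon hq i j m := by
  have Pσ1 : ∀ a : A, s' (((hq.σ : Hˣ) : H) ⊗ₜ[k] a)
      = (α ^ (0 : ℤ)) a ⊗ₜ[k] ((hq.σ : Hˣ) : H) := fun a => by
    simpa using step_sigma hq gb α s' ht hgood hD1 a
  have Pσinv : ∀ a : A, s' (((hq.σ⁻¹ : Hˣ) : H) ⊗ₜ[k] a)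
      = (α ^ (0 : ℤ)) a ⊗ₜ[k] ((hq.σ⁻¹ : Hˣ) : H) := fun a => by
    simpa using step_sigma_inv hq gb α s' ht hgood hD1 a
  have P1 : ∀ a : A, s' ((1 : H) ⊗ₜ[k] a) = (α ^ (0 : ℤ)) a ⊗ₜ[k] (1 : H) := fun a => by
    simpa using ht.unit_H a
  have Pσ : ∀ (i : ℤ) (a : A), s' (((hq.σ ^ i : Hˣ) : H) ⊗ₜ[k] a)
      = (α ^ (0 : ℤ)) a ⊗ₜ[k] ((hq.σ ^ i : Hˣ) : H) := by
    intro i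
    induction i using Int.induction_on with
    | zero => intro a; simpa using P1 a
    | succ i ih =>
        intro a
        have := step_mul α s' ht ih Pσ1 a
        rw [← Units.val_mul, ← zpow_add_one] at this
        simpa using this
    | pred i ih =>
        intro a
        have := step_mul α s' ht ih Pσinv a
        rw [← Units.val_mul, ← zpow_sub_one] at this
        simpa using this
  have PD1 : ∀ (j : ℕ) (a : A), s' ((hq.D₁ ^ j) ⊗ₜ[k] a)
      = (α ^ (j : ℤ)) a ⊗ₜ[k] (hq.D₁ ^ j) := by
    intro j
    induction j with
    | zero => intro a; simpa using P1 a
    | succ j ih =>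
        intro a
        have hb : ∀ a : A, s' (hq.D₁ ⊗ₜ[k] a) = (α ^ (1 : ℤ)) a ⊗ₜ[k] hq.D₁ := fun a => by
          simpa [zpow_one] using hD1 a
        have := step_mul α s' ht ih hb a
        rw [← pow_succ] at this
        rw [this]
        norm_num
  have PD2 : ∀ (m : ℕ) (a : A), s' ((hq.D₂ ^ m) ⊗ₜ[k] a)
      = (α ^ (-(m : ℤ))) a ⊗ₜ[k] (hq.D₂ ^ m) := by
    intro m
    induction m with
    | zero => intro a; simpa using P1 a
    | succ m ih =>
        intro a
        have hb : ∀ a : A, s' (hq.D₂ ⊗ₜ[k] a) = (α ^ (-1 : ℤ)) a ⊗ₜ[k] hq.D₂ := fun a => by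
          have h := step_D2 hq gb α s' ht hgood hD1 a
          rw [h, show (α ^ (-1 : ℤ)) = α⁻¹ from zpow_neg_one α]
          rfl
        have := step_mul α s' ht ih hb a
        rw [← pow_succ] at this
        rw [this]
        congr 2
        push_cast
        ring
  intro i j m a
  have h1 := step_mul α s' ht (Pσ i) (PD1 j)
  have h2 := step_mul α s' ht h1 (PD2 m) a
  rw [show ((0 : ℤ) + (j : ℤ) + -(m : ℤ)) = (j : ℤ) - (m : ℤ) by ring] at h2
  exact h2

end Uniqueness

end S4

end Statement4Aux

open Paper in
/-- For every algebra automorphism `α` of `A` there is exactly one good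
transposition `s` of `H_q` on `A` with `s(D₁ ⊗ a) = α(a) ⊗ D₁`, and it is given by
`s(σ^i D₁^j D₂^m ⊗ a) = α^{j-m}(a) ⊗ σ^i D₁^j D₂^m`. -/
theorem statement_4 {k : Type*} [Field k] {q : k} (hq0 : q ≠ 0)
    {H : Type*} [Ring H] [HopfAlgebra k H] (hq : HqData k H q)
    {A : Type*} [Ring A] [Algebra k A] (α : A ≃ₐ[k] A) :
    (∃! s : H ⊗[k] A ≃ₗ[k] A ⊗[k] H,
        IsTransposition k H A s ∧ GoodTransposition k H A hq s
          ∧ ∀ a : A, s (hq.D₁ ⊗ₜ[k] a) = α a ⊗ₜ[k] hq.D₁)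
    ∧ ∀ s : H ⊗[k] A ≃ₗ[k] A ⊗[k] H,
        IsTransposition k H A s → GoodTransposition k H A hq s →
        (∀ a : A, s (hq.D₁ ⊗ₜ[k] a) = α a ⊗ₜ[k] hq.D₁) →
        ∀ (i : ℤ) (j m : ℕ) (a : A),
          s ((((hq.σ ^ i : Hˣ) : H) * hq.D₁ ^ j * hq.D₂ ^ m) ⊗ₜ[k] a)
            = ((α ^ ((j : ℤ) - (m : ℤ))) a)
                ⊗ₜ[k] (((hq.σ ^ i : Hˣ) : H) * hq.D₁ ^ j * hq.D₂ ^ m) := by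
  classical
  have hGB : Nonempty (S4.GB hq) := by
    by_cases hgen : ∀ l : ℕ, 2 ≤ l → ¬ IsPrimitiveRoot q l
    · obtain ⟨b, hb⟩ := hq.basis_generic hgen
      refine ⟨⟨ℤ × ℕ × ℕ, b, fun x => (x.2.1 : ℤ) - (x.2.2 : ℤ), ?_, ?_,
        b.coord (0, 1, 0), ?_⟩⟩
      · intro i j m
        exact ⟨1, (i, j, m), by rw [one_smul]; exact (hb i j m).symm, fun _ => rfl⟩
      · exact fun x => ⟨x.1, x.2.1, x.2.2, hb x.1 x.2.1 x.2.2, rfl⟩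
      · have hD : b (0, 1, 0) = hq.D₁ := by
          rw [hb]; simp
        rw [← hD]
        simp [Module.Basis.coord_apply, Module.Basis.repr_self]
    · push_neg at hgen
      obtain ⟨l, hl2, hlprim⟩ := hgen
      obtain ⟨h1, h2, b, hb⟩ := hq.basis_root l hl2 hlprim
      have hl0 : 0 < l := by omega
      have hl1 : 1 < l := by omega
      refine ⟨⟨ℤ × Fin l × Fin l, b,
        fun x => ((x.2.1 : ℕ) : ℤ) - ((x.2.2 : ℕ) : ℤ), ?_, ?_,
        b.coord (0, ⟨1, hl1⟩, ⟨0, hl0⟩), ?_⟩⟩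
      · intro i j m
        by_cases hjm : j < l ∧ m < l
        · exact ⟨1, (i, ⟨j, hjm.1⟩, ⟨m, hjm.2⟩),
            by rw [one_smul]; exact (hb i ⟨j, hjm.1⟩ ⟨m, hjm.2⟩).symm, fun _ => rfl⟩
        · have hz : S4.mon hq i j m = 0 := by
            rcases not_and_or.mp hjm with hj | hm
            · have hD : hq.D₁ ^ j = 0 := by
                obtain ⟨r, rfl⟩ : ∃ r, j = l + r := ⟨j - l, by omega⟩
                rw [pow_add, h1, zero_mul]
              simp [S4.mon, hD]
            · have hD : hq.D₂ ^ m = 0 := by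
                obtain ⟨r, rfl⟩ : ∃ r, m = l + r := ⟨m - l, by omega⟩
                rw [pow_add, h2, zero_mul]
              simp [S4.mon, hD]
          exact ⟨0, (i, ⟨0, hl0⟩, ⟨0, hl0⟩), by rw [zero_smul]; exact hz,
            fun hc => absurd rfl hc⟩
      · exact fun x => ⟨x.1, (x.2.1 : ℕ), (x.2.2 : ℕ), hb x.1 x.2.1 x.2.2, rfl⟩
      · have hD : b (0, ⟨1, hl1⟩, ⟨0, hl0⟩) = hq.D₁ := by
          rw [hb]; simp
        rw [← hD]
        simp [Module.Basis.coord_apply, Module.Basis.repr_self]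
  obtain ⟨gb⟩ := hGB
  constructor
  · refine ⟨S4.sE hq gb α, ⟨S4.isTransposition_sE hq gb α hq0, S4.good_sE hq gb α,
      fun a => S4.sE_D1 hq gb α a⟩, ?_⟩
    rintro s' ⟨ht, hgood, hD1⟩
    apply LinearEquiv.toLinearMap_injective
    refine S4.extHA hq gb fun x a => ?_
    obtain ⟨i, j, m, hbx, hdx⟩ := gb.rep x
    show s' (gb.b x ⊗ₜ[k] a) = S4.sE hq gb α (gb.b x ⊗ₜ[k] a)
    rw [S4.sE_basis, hdx, hbx, S4.formula hq gb α s' ht hgood hD1 i j m a]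
  · intro s' h1 h2 h3 i j m a
    exact S4.formula hq gb α s' h1 h2 h3 i j m a
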